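/- Let D = {x ∈ ℝ³ : x₃ > 0 and 1 < |x| < 2} (the open upper half of the spherical shell) and let K be the loop K(t) = (cos t, sin t, 0), 0 ≤ t < 2π, in cl(D). Then there exist constants c > 0 and ε₀ > 0 such that for every ε ∈ (0, ε₀] and every loop K' ∈ 𝒦 with d_H(K, K') ≤ ε, one has ℓ_{K'} ≥ 2π − c ε². -/

import Mathlib

open Set MeasureTheory
open scoped ENNReal RealInnerProductSpace

noncomputable section

namespace PursuitRB

/-- Euclidean space `ℝ^d`. -/
abbrev E (d : ℕ) : Type := EuclideanSpace ℝ (Fin d)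

variable {d : ℕ}

/-- The intrinsic distance in the closure of `D`: the infimum of lengths of continuous
rectifiable curves joining the two points inside `cl D`. -/
def intrinsicDist (D : Set (E d)) (v z : E d) : ℝ≥0∞ :=
  ⨅ (γ : ℝ → E d) (_ : ContinuousOn γ (Icc 0 1)) (_ : ∀ t ∈ Icc (0:ℝ) 1, γ t ∈ closure D)
    (_ : γ 0 = v) (_ : γ 1 = z), eVariationOn γ (Icc 0 1)

/-- Intrinsic Hausdorff distance between two subsets of `cl D`. -/
def hausdorffI (D A B : Set (E d)) : ℝ≥0∞ :=
  max (⨆ v ∈ A, ⨅ z ∈ B, intrinsicDist D v z) (⨆ v ∈ B, ⨅ z ∈ A, intrinsicDist D v z)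

/-- A domain: a nonempty open connected set. -/
def IsDomain (D : Set (E d)) : Prop := IsOpen D ∧ IsConnected D

/-- The set of exterior unit normals at a boundary point. -/
def extNormals (D : Set (E d)) (z : E d) (r : ℝ) : Set (E d) :=
  {ν | ‖ν‖ = 1 ∧ Metric.ball (z + r • ν) r ∩ D = ∅}

/-- Uniform exterior sphere condition with radius `r`. -/
def UnifExtSphere (D : Set (E d)) (r : ℝ) : Prop :=
  ∀ z ∈ frontier D, (extNormals D z r).Nonempty ∧
    ∀ s : ℝ, 0 < s → s ≤ r → extNormals D z s = extNormals D z r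

/-- Uniform interior cone condition with radius `δ₀` and angle `α`. -/
def UnifIntCone (D : Set (E d)) (δ₀ α : ℝ) : Prop :=
  ∀ v ∈ frontier D, ∃ m : E d, ‖m‖ = 1 ∧
    ∀ w ∈ D ∩ Metric.ball v δ₀, ∀ u : E d, ‖u‖ * Real.cos α < ⟪u, m⟫ →
      w + u ∈ Metric.ball v δ₀ → w + u ∈ D

/-- ESIC domain: a bounded domain satisfying the uniform exterior sphere condition and the
uniform interior cone condition. -/
def IsESIC (D : Set (E d)) : Prop :=
  IsDomain D ∧ Bornology.IsBounded D ∧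
    (∃ r > 0, UnifExtSphere D r) ∧
    (∃ δ₀ > 0, ∃ α : ℝ, 0 < α ∧ α ≤ Real.pi / 2 ∧ UnifIntCone D δ₀ α)

/-- A rectifiable loop in `cl D`, parametrized by arc length (periodically, with
period equal to its length). -/
structure Loop (D : Set (E d)) where
  toFun : ℝ → E d
  len : ℝ
  len_nonneg : 0 ≤ len
  cont : Continuous toFun
  mem : ∀ t, toFun t ∈ closure D
  periodic : Function.Periodic toFun len
  unitSpeed : ∀ s ∈ Icc (0:ℝ) len, eVariationOn toFun (Icc 0 s) = ENNReal.ofReal s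
  const_of_len_zero : len = 0 → ∀ s t, toFun s = toFun t

/-- The image of a loop. -/
def Loop.image {D : Set (E d)} (K : Loop D) : Set (E d) := K.toFun '' Icc 0 K.len

/-- The euclidean `ε`-neighbourhood of (the image of) a loop inside `cl D`. -/
def loopNbhd (D : Set (E d)) (K : Loop D) (ε : ℝ) : Set (E d) :=
  {z ∈ closure D | Metric.infDist z K.image < ε}

/-- `f` and `g`, viewed as loops parametrized by the circle `ℝ / ℤ`, are homotopic through a
homotopy taking values in `S`. -/
def LoopHomotopyIn (S : Set (E d)) (f g : ℝ → E d) : Prop :=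
  ∃ H : ℝ → ℝ → E d,
    ContinuousOn (fun p : ℝ × ℝ => H p.1 p.2) (univ ×ˢ Icc (0:ℝ) 1) ∧
    (∀ t γ, H (t + 1) γ = H t γ) ∧
    (∀ t : ℝ, ∀ γ ∈ Icc (0:ℝ) 1, H t γ ∈ S) ∧
    (∀ t, H t 0 = f t) ∧ (∀ t, H t 1 = g t)

/-- Semi-stable rubber band. -/
def IsSemiStableRB (D : Set (E d)) (K : Loop D) : Prop :=
  ∃ ε > 0, ∀ K₁ : Loop D,
    LoopHomotopyIn (closure (loopNbhd D K ε)) (fun t => K.toFun (t * K.len))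
      (fun t => K₁.toFun (t * K₁.len)) → K.len ≤ K₁.len

/-- Stable rubber band. -/
def IsStableRB (D : Set (E d)) (K : Loop D) : Prop :=
  IsSemiStableRB D K ∧
  ∃ ε > 0, ∀ η : ℝ, 0 < η → η ≤ ε → ∃ δ > 0, ∀ K₁ : Loop D,
    ENNReal.ofReal η ≤ hausdorffI D K.image K₁.image →
    ∀ n : ℕ, 1 ≤ n →
      LoopHomotopyIn (closure (loopNbhd D K ε)) (fun t => K.toFun (t * (n * K.len)))
        (fun t => K₁.toFun (t * K₁.len)) →
      n * K.len + δ < K₁.len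

/-- A length-monotonic homotopy contracting the loop `K` to a point of `cl D`. -/
structure Contraction (D : Set (E d)) (K : Loop D) where
  fam : ℝ → Loop D
  H : ℝ → ℝ → E d
  cont : ContinuousOn (fun p : ℝ × ℝ => H p.1 p.2) (univ ×ˢ Icc (0:ℝ) 1)
  periodic : ∀ t γ, H (t + 1) γ = H t γ
  compat : ∀ t : ℝ, ∀ γ ∈ Icc (0:ℝ) 1, H t γ = (fam γ).toFun (t * (fam γ).len)
  init : fam 0 = K
  final : (fam 1).len = 0
  mono : AntitoneOn (fun γ => (fam γ).len) (Icc (0:ℝ) 1)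

/-- `K` is well-contractible with contractibility constant `c`. -/
def WellContractible (D : Set (E d)) (K : Loop D) (c : ℝ) : Prop :=
  ∃ C : Contraction D K, ∀ γ η : ℝ, γ ∈ Icc (0:ℝ) 1 → η ∈ Icc (0:ℝ) 1 → γ < η →
    ENNReal.ofReal c * hausdorffI D (C.fam γ).image (C.fam η).image *
        ENNReal.ofReal (C.fam γ).len
      ≤ ENNReal.ofReal ((C.fam γ).len - (C.fam η).len)

/-- A CL domain: a bounded ESIC domain all of whose loops are uniformly well-contractible. -/
def IsCLDomain (D : Set (E d)) : Prop :=
  IsESIC D ∧ ∃ c > 0, ∀ K : Loop D, WellContractible D K c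

/-- An admissible curve in `cl D`: continuous and `1`-Lipschitz for the intrinsic distance. -/
def Admissible (D : Set (E d)) (x : ℝ → E d) : Prop :=
  ContinuousOn x (Ici 0) ∧ (∀ t : ℝ, 0 ≤ t → x t ∈ closure D) ∧
    ∀ s t : ℝ, 0 ≤ s → 0 ≤ t → intrinsicDist D (x s) (x t) ≤ ENNReal.ofReal |s - t|

/-- The topology of uniform convergence on compacts on the path space. -/
def curveTop (d : ℕ) : TopologicalSpace (ℝ → E d) :=
  UniformOnFun.topologicalSpace ℝ (E d) {K : Set ℝ | IsCompact K}

/-- Borel measurability of a strategy with respect to the topology of uniform convergence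
on compacts on the path space. -/
def StratMeasurable (d : ℕ) (F : ℝ → (ℝ → E d) → (ℝ → E d) → E d) : Prop :=
  letI : TopologicalSpace (ℝ → E d) := curveTop d
  letI : MeasurableSpace (ℝ → E d) := borel (ℝ → E d)
  Measurable fun p : ℝ × (ℝ → E d) × (ℝ → E d) => F p.1 p.2.1 p.2.2

/-- A strategy is non-anticipative. -/
def NonAnticipative (d : ℕ) (F : ℝ → (ℝ → E d) → (ℝ → E d) → E d) : Prop :=
  ∀ t : ℝ, 0 ≤ t → ∀ x x' y y' : ℝ → E d,
    (∀ s, 0 ≤ s → s ≤ t → x s = x' s) → (∀ s, 0 ≤ s → s ≤ t → y s = y' s) →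
    F t x y = F t x' y'

/-- The family `Λ` of quadruples `(x, y, Fx, Fy)`. -/
def InLambda (D : Set (E d)) (x y : ℝ → E d)
    (Fx Fy : ℝ → (ℝ → E d) → (ℝ → E d) → E d) : Prop :=
  Admissible D x ∧ Admissible D y ∧
  StratMeasurable d Fx ∧ StratMeasurable d Fy ∧
  NonAnticipative d Fx ∧ NonAnticipative d Fy ∧
  (∀ t : ℝ, 0 ≤ t → ∀ v, HasDerivAt x v t → v = Fx t x y) ∧
  (∀ t : ℝ, 0 ≤ t → ∀ v, HasDerivAt y v t → v = Fy t x y)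

/-- The family `Λ₀ ⊆ Λ`: the pursuer's strategy does not depend on the evader's path. -/
def InLambda0 (D : Set (E d)) (x y : ℝ → E d)
    (Fx Fy : ℝ → (ℝ → E d) → (ℝ → E d) → E d) : Prop :=
  InLambda D x y Fx Fy ∧ ∀ t : ℝ, 0 ≤ t → ∀ w u u' : ℝ → E d, Fx t w u = Fx t w u'

/-- `inf_{t ≥ 0} dist_I(x(t), y(t))`. -/
def evasionInf (D : Set (E d)) (x y : ℝ → E d) : ℝ≥0∞ :=
  ⨅ t ∈ Ici (0:ℝ), intrinsicDist D (x t) (y t)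

/-- The Man has a successful evasion strategy from `(x₀, y₀)`. -/
def SuccessfulEvasion (D : Set (E d)) (x₀ y₀ : E d) : Prop :=
  (∃ x y Fx Fy, x 0 = x₀ ∧ y 0 = y₀ ∧ InLambda D x y Fx Fy) ∧
  ∀ (x : ℝ → E d) (Fx : ℝ → (ℝ → E d) → (ℝ → E d) → E d), x 0 = x₀ →
    (∃ y Fy, y 0 = y₀ ∧ InLambda D x y Fx Fy) →
    ∃ y Fy, y 0 = y₀ ∧ InLambda D x y Fx Fy ∧ 0 < evasionInf D x y

/-- A minimal geodesic in `cl D` from `v` to `z`, parametrized by arc length. -/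
structure GeodesicIn (D : Set (E d)) (v z : E d) where
  toFun : ℝ → E d
  len : ℝ
  len_nonneg : 0 ≤ len
  contOn : ContinuousOn toFun (Icc 0 len)
  mem : ∀ t ∈ Icc (0:ℝ) len, toFun t ∈ closure D
  source : toFun 0 = v
  target : toFun len = z
  unitSpeed : ∀ s ∈ Icc (0:ℝ) len, eVariationOn toFun (Icc 0 s) = ENNReal.ofReal s
  minimal : ENNReal.ofReal len = intrinsicDist D v z

abbrev E3 : Type := EuclideanSpace ℝ (Fin 3)

/-- Geodesic distance on the sphere of radius `1/√κ` in `ℝ³`. -/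
def sphDistK (κ : ℝ) (u v : E3) : ℝ := (1 / Real.sqrt κ) * Real.arccos (κ * ⟪u, v⟫)

/-- Arc-length parametrization of the minimal great-circle arc from `u` to `v` on the sphere
of radius `1/√κ`. -/
def sphArcK (κ : ℝ) (u v : E3) (s : ℝ) : E3 :=
  if sphDistK κ u v = 0 then u
  else (Real.sin (Real.sqrt κ * (sphDistK κ u v - s)) /
          Real.sin (Real.sqrt κ * sphDistK κ u v)) • u
     + (Real.sin (Real.sqrt κ * s) / Real.sin (Real.sqrt κ * sphDistK κ u v)) • v

/-- Comparison inequality for a pair of sides of a geodesic triangle against the corresponding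
sides of a spherical comparison triangle. -/
def cmpPair (D : Set (E d)) {a b a' b' : E d} (γ : GeodesicIn D a b) (γ' : GeodesicIn D a' b')
    (κ : ℝ) (u v u' v' : E3) : Prop :=
  ∀ s ∈ Icc (0:ℝ) γ.len, ∀ t ∈ Icc (0:ℝ) γ'.len,
    intrinsicDist D (γ.toFun s) (γ'.toFun t) ≤
      ENNReal.ofReal (sphDistK κ (sphArcK κ u v s) (sphArcK κ u' v' t))

/-- `cl D`, with the intrinsic distance, is a `CAT(κ)` space (`κ > 0`). -/
def IsCAT (κ : ℝ) (D : Set (E d)) : Prop :=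
  (∀ v ∈ closure D, ∀ z ∈ closure D,
      intrinsicDist D v z < ENNReal.ofReal (Real.pi / Real.sqrt κ) →
      Nonempty (GeodesicIn D v z)) ∧
  (∀ p ∈ closure D, ∀ q ∈ closure D, ∀ r ∈ closure D,
    ∀ (γ₁ : GeodesicIn D p q) (γ₂ : GeodesicIn D q r) (γ₃ : GeodesicIn D r p),
      γ₁.len + γ₂.len + γ₃.len < 2 * Real.pi / Real.sqrt κ →
      ∃ pt qt rt : E3, ‖pt‖ = 1 / Real.sqrt κ ∧ ‖qt‖ = 1 / Real.sqrt κ ∧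
        ‖rt‖ = 1 / Real.sqrt κ ∧
        sphDistK κ pt qt = γ₁.len ∧ sphDistK κ qt rt = γ₂.len ∧ sphDistK κ rt pt = γ₃.len ∧
        cmpPair D γ₁ γ₁ κ pt qt pt qt ∧ cmpPair D γ₁ γ₂ κ pt qt qt rt ∧
        cmpPair D γ₁ γ₃ κ pt qt rt pt ∧ cmpPair D γ₂ γ₂ κ qt rt qt rt ∧
        cmpPair D γ₂ γ₃ κ qt rt rt pt ∧ cmpPair D γ₃ γ₃ κ rt pt rt pt)

/-- There is a unique (minimal, arc-length parametrized) geodesic from `v` to `z` in `cl D`. -/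
def UniqueGeodesic (D : Set (E d)) (v z : E d) : Prop :=
  ∃ γ : GeodesicIn D v z, ∀ γ' : GeodesicIn D v z, ∀ s ∈ Icc (0:ℝ) γ.len, γ'.toFun s = γ.toFun s

/-- `(x, y)` is a simple pursuit. -/
def SimplePursuit (D : Set (E d)) (x y : ℝ → E d) : Prop :=
  Admissible D x ∧ Admissible D y ∧
  (∀ t : ℝ, 0 ≤ t → x t ≠ y t → UniqueGeodesic D (x t) (y t)) ∧
  (∀ᵐ t ∂(volume.restrict (Ici (0:ℝ))), x t ≠ y t →
      ∃ v, HasDerivAt x v t ∧ ‖v‖ = 1 ∧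
        ∃ γ : GeodesicIn D (x t) (y t), HasDerivWithinAt γ.toFun v (Ici 0) 0) ∧
  (∀ t₀ : ℝ, 0 ≤ t₀ → x t₀ = y t₀ → ∀ t, t₀ ≤ t → x t = y t)

/-- `K` is a `k`-times broken geodesic loop. -/
def IsBrokenGeodesicLoop (D : Set (E d)) (K : Loop D) (k : ℕ) : Prop :=
  ∃ brk : Fin k → ℝ, StrictMono brk ∧ (∀ i, brk i ∈ Ico (0:ℝ) K.len) ∧
    ∃ ρ > 0, ∀ a L : ℝ, 0 ≤ L → L ≤ K.len → L < ρ →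
      (∀ i, ∀ m : ℤ, ¬ (a < brk i + m * K.len ∧ brk i + m * K.len < a + L)) →
      intrinsicDist D (K.toFun a) (K.toFun (a + L)) = ENNReal.ofReal L

/-- Orthogonal projection onto the first `j` coordinates of `ℝ^d`. -/
def proj (d j : ℕ) (w : E d) : E d :=
  (WithLp.equiv 2 (Fin d → ℝ)).symm fun k => if (k : ℕ) < j then w k else 0

/-- The pursuit vector field `χ^{(i)}` (where `i : Fin d` encodes the `1`-based coordinate
index `i+1`; `Π_{i-1}` is projection onto the first `i.val` coordinates, and the distinguished
coordinate is `i` itself). -/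
def chi (δ : ℝ) (i : Fin d) (x y : E d) : E d :=
  (WithLp.equiv 2 (Fin d → ℝ)).symm fun k =>
    if (k : ℕ) < (i : ℕ) then
      (min 1 (‖proj d (i : ℕ) (y - x)‖ / δ) * Real.sqrt (1 - δ ^ 2) /
          ‖proj d (i : ℕ) (y - x)‖) * (y k - x k)
    else if k = i then
      min 1 (|y i - x i| / δ) *
        Real.sqrt (1 - (min 1 (‖proj d (i : ℕ) (y - x)‖ / δ) * Real.sqrt (1 - δ ^ 2)) ^ 2) *
        Real.sign (y i - x i)
    else 0

/-- The long open cuboid `D₂ = (-1/2,1/2)^{d-1} × (0,L)`. -/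
def cuboid (d : ℕ) (L : ℝ) : Set (E d) :=
  {w | (∀ k : Fin d, (k : ℕ) < d - 1 → |w k| < 1/2) ∧
       ∀ k : Fin d, (k : ℕ) = d - 1 → 0 < w k ∧ w k < L}

/-- The closed cuboid `[-1/2,1/2]^{d-1} × [0,L]`, the closure of `D₂`. -/
def cuboidCl (d : ℕ) (L : ℝ) : Set (E d) :=
  {w | (∀ k : Fin d, (k : ℕ) < d - 1 → |w k| ≤ 1/2) ∧
       ∀ k : Fin d, (k : ℕ) = d - 1 → 0 ≤ w k ∧ w k ≤ L}


/-- The open upper half of the spherical shell in `ℝ³`. -/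
def shell : Set (E 3) := {w : E 3 | 0 < w 2 ∧ 1 < ‖w‖ ∧ ‖w‖ < 2}

/-- The image of the loop `t ↦ (cos t, sin t, 0)`: the unit circle in the equatorial plane. -/
def equator : Set (E 3) := {w : E 3 | w 2 = 0 ∧ (w 0) ^ 2 + (w 1) ^ 2 = 1}

section Aux17

open Real intervalIntegral Finset

private lemma telesc17 (p : ℕ → ℝ) (m n : ℕ) (h : m ≤ n) :
    ∑ i ∈ Finset.Ico m n, (p (i+1) - p i) = p n - p m := by
  rw [Finset.sum_Ico_eq_sub _ h, Finset.sum_range_sub (fun i => p i),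
    Finset.sum_range_sub (fun i => p i)]
  ring

private lemma cyc17 (p : ℕ → ℝ) (n a b : ℕ) (hp : p 0 = p n) (ha : a ≤ n) (hb : b ≤ n) :
    2 * (p a - p b) ≤ ∑ i ∈ Finset.range n, |p (i+1) - p i| := by
  have key : ∀ a b : ℕ, a ≤ b → b ≤ n →
      2 * |p a - p b| ≤ ∑ i ∈ Finset.range n, |p (i+1) - p i| := by
    intro a b hab hbn
    have han : a ≤ n := hab.trans hbn
    have split : ∑ i ∈ Finset.range n, |p (i+1) - p i| =
        (∑ i ∈ Finset.Ico 0 a, |p (i+1) - p i|) + (∑ i ∈ Finset.Ico a b, |p (i+1) - p i|)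
          + ∑ i ∈ Finset.Ico b n, |p (i+1) - p i| := by
      rw [Finset.sum_Ico_consecutive _ (Nat.zero_le a) hab,
        Finset.sum_Ico_consecutive _ (Nat.zero_le b) hbn, Finset.range_eq_Ico]
    have t1 : |p b - p a| ≤ ∑ i ∈ Finset.Ico a b, |p (i+1) - p i| :=
      (telesc17 p a b hab) ▸ Finset.abs_sum_le_sum_abs _ _
    have t2 : |p a - p 0| ≤ ∑ i ∈ Finset.Ico 0 a, |p (i+1) - p i| :=
      (telesc17 p 0 a (Nat.zero_le a)) ▸ Finset.abs_sum_le_sum_abs _ _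
    have t3 : |p n - p b| ≤ ∑ i ∈ Finset.Ico b n, |p (i+1) - p i| :=
      (telesc17 p b n hbn) ▸ Finset.abs_sum_le_sum_abs _ _
    have t4 : |p a - p b| ≤ |p a - p 0| + |p n - p b| := by
      have e : p a - p b = (p a - p 0) + (p n - p b) := by rw [hp]; ring
      calc |p a - p b| = |(p a - p 0) + (p n - p b)| := by rw [← e]
        _ ≤ _ := abs_add_le _ _
    have habs : |p a - p b| = |p b - p a| := abs_sub_comm _ _
    linarith
  rcases le_total a b with h | h
  · have h2 := key a b h hb
    have := le_abs_self (p a - p b); linarith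
  · have h2 := key b a h ha
    have habs : |p b - p a| = |p a - p b| := abs_sub_comm _ _
    linarith [le_abs_self (p a - p b)]

set_option maxHeartbeats 1000000 in
private lemma key17 (ε a b h θ ψ : ℝ) (hε : 0 < ε) (hε1 : ε ≤ 1/10)
    (h1 : 1 ≤ a^2 + b^2 + h^2)
    (h2 : (a - cos ψ)^2 + (b - sin ψ)^2 + h^2 ≤ 4*ε^2)
    (hθ : |θ - ψ| ≤ 2*ε) :
    1 - 8*ε^2 ≤ a * cos θ + b * sin θ := by
  obtain ⟨δ, hδ⟩ : ∃ δ, δ = θ - ψ := ⟨_, rfl⟩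
  obtain ⟨c, hc⟩ : ∃ c, c = cos ψ := ⟨_, rfl⟩
  obtain ⟨s, hs⟩ : ∃ s, s = sin ψ := ⟨_, rfl⟩
  have hθψ : θ = ψ + δ := by rw [hδ]; ring
  have hcs : c^2 + s^2 = 1 := by rw [hc, hs, add_comm]; exact sin_sq_add_cos_sq ψ
  obtain ⟨A, hA⟩ : ∃ A, A = a * c + b * s := ⟨_, rfl⟩
  obtain ⟨B, hB⟩ : ∃ B, B = b * c - a * s := ⟨_, rfl⟩
  rw [← hc, ← hs] at h2
  have hε2 : ε^2 ≤ 1/100 := by nlinarith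
  have hAge : 1 - 2*ε^2 ≤ A := by nlinarith
  have hBsq : B^2 ≤ 4*ε^2 := by
    have hid : B^2 + ((b - s)*s + (a - c)*c)^2 =
        ((a - c)^2 + (b - s)^2) * (c^2 + s^2) := by rw [hB]; ring
    rw [hcs, mul_one] at hid
    nlinarith [sq_nonneg ((b - s)*s + (a - c)*c), sq_nonneg h]
  have hcosδ : 1 - δ^2/2 ≤ cos δ := one_sub_sq_div_two_le_cos
  have hδsq : δ^2 ≤ 4*ε^2 := by
    rw [hδ]; nlinarith [sq_abs (θ - ψ), abs_nonneg (θ - ψ)]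
  have hsinδ : |sin δ| ≤ |δ| := abs_sin_le_abs
  have habsδ : |δ| ≤ 2*ε := by rw [hδ]; exact hθ
  have expand : a * cos θ + b * sin θ = A * cos δ + B * sin δ := by
    rw [hθψ, cos_add, sin_add, hA, hB, hc, hs]; ring
  rw [expand]
  have hcos1 : cos δ ≤ 1 := cos_le_one δ
  have hcospos : (0:ℝ) ≤ cos δ := by linarith
  have hBabs : |B| ≤ 2*ε := by
    calc |B| = Real.sqrt (B^2) := (Real.sqrt_sq_eq_abs B).symm
      _ ≤ Real.sqrt ((2*ε)^2) := Real.sqrt_le_sqrt (by nlinarith)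
      _ = 2*ε := Real.sqrt_sq (by linarith)
  have hBsin : -(4*ε^2) ≤ B * sin δ := by
    have h1' : |B * sin δ| ≤ 2*ε * (2*ε) := by
      rw [abs_mul]
      exact mul_le_mul hBabs (hsinδ.trans habsδ) (abs_nonneg _) (by linarith)
    have := neg_abs_le (B * sin δ)
    nlinarith
  have hAcos : (1 - 2*ε^2) * cos δ ≤ A * cos δ :=
    mul_le_mul_of_nonneg_right hAge hcospos
  have hAcos2 : (1 - 2*ε^2) * (1 - 2*ε^2) ≤ (1 - 2*ε^2) * cos δ := by
    apply mul_le_mul_of_nonneg_left _ (by nlinarith)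
    linarith
  nlinarith [sq_nonneg ε]

private lemma abs_cos_int17 : ∫ θ in (0:ℝ)..(2*π), |cos θ| = 4 := by
  have pi_pos := Real.pi_pos
  have i1 : ∫ θ in (0:ℝ)..(π/2), |cos θ| = 1 := by
    rw [integral_congr (g := cos) ?_, integral_cos]
    · simp
    · intro x hx
      rw [Set.uIcc_of_le (by linarith)] at hx
      exact abs_of_nonneg (cos_nonneg_of_mem_Icc ⟨by linarith [hx.1], hx.2⟩)
  have i2 : ∫ θ in (π/2)..(3*π/2), |cos θ| = 2 := by
    rw [integral_congr (g := fun x => -cos x) ?_]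
    · rw [intervalIntegral.integral_neg, integral_cos]
      have : Real.sin (3*π/2) = -1 := by
        have : (3:ℝ)*π/2 = 2*π - π/2 := by ring
        rw [this, Real.sin_two_pi_sub, Real.sin_pi_div_two]
      rw [this, Real.sin_pi_div_two]; ring
    · intro x hx
      rw [Set.uIcc_of_le (by linarith)] at hx
      have : cos x ≤ 0 := cos_nonpos_of_pi_div_two_le_of_le hx.1 (by linarith [hx.2])
      simp [abs_of_nonpos this]
  have i3 : ∫ θ in (3*π/2)..(2*π), |cos θ| = 1 := by
    rw [integral_congr (g := cos) ?_, integral_cos]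
    · have : Real.sin (3*π/2) = -1 := by
        have : (3:ℝ)*π/2 = 2*π - π/2 := by ring
        rw [this, Real.sin_two_pi_sub, Real.sin_pi_div_two]
      rw [this, Real.sin_two_pi]; ring
    · intro x hx
      rw [Set.uIcc_of_le (by linarith)] at hx
      have : 0 ≤ cos x := by
        have h2 : cos (2*π - x) = cos x := Real.cos_two_pi_sub x
        rw [← h2]
        apply cos_nonneg_of_mem_Icc
        constructor
        · linarith [hx.2]
        · linarith [hx.1]
      exact abs_of_nonneg this
  have h12 := integral_add_adjacent_intervals (μ := MeasureTheory.volume)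
    ((continuous_cos.abs).intervalIntegrable (0:ℝ) (π/2))
    ((continuous_cos.abs).intervalIntegrable (π/2) (3*π/2))
  have h123 := integral_add_adjacent_intervals (μ := MeasureTheory.volume)
    ((continuous_cos.abs).intervalIntegrable (0:ℝ) (3*π/2))
    ((continuous_cos.abs).intervalIntegrable (3*π/2) (2*π))
  rw [← h123, ← h12, i1, i2, i3]; norm_num

private lemma planar_int17 (a b : ℝ) :
    ∫ θ in (0:ℝ)..(2*π), |a * cos θ + b * sin θ| ≤ 4 * Real.sqrt (a^2 + b^2) := by
  by_cases hab : a = 0 ∧ b = 0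
  · simp [hab.1, hab.2, Real.sqrt_nonneg]
  · set z : ℂ := ⟨a, b⟩ with hz
    have hz0 : z ≠ 0 := by
      intro h
      exact hab ⟨by simpa using congrArg Complex.re h, by simpa using congrArg Complex.im h⟩
    set r := ‖z‖ with hr
    have hrpos : 0 < r := norm_pos_iff.mpr hz0
    have hre : a = r * cos z.arg := by
      rw [Complex.cos_arg hz0]
      field_simp
      exact mul_comm _ _
    have him : b = r * sin z.arg := by
      rw [Complex.sin_arg]
      field_simp
      exact mul_comm _ _
    have hsqrt : r = Real.sqrt (a^2 + b^2) := by
      rw [hr, Complex.norm_def, Complex.normSq_mk, show a*a+b*b = a^2+b^2 by ring]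
    have heq : ∀ θ : ℝ, a * cos θ + b * sin θ = r * cos (θ - z.arg) := by
      intro θ
      rw [Real.cos_sub, hre, him]; ring
    refine le_of_eq ?_
    calc ∫ θ in (0:ℝ)..(2*π), |a * cos θ + b * sin θ|
        = ∫ θ in (0:ℝ)..(2*π), r * |cos (θ - z.arg)| := by
          apply integral_congr; intro x _; simp only []
          rw [heq, abs_mul, abs_of_pos hrpos]
      _ = r * ∫ θ in (0:ℝ)..(2*π), |cos (θ - z.arg)| := by rw [intervalIntegral.integral_const_mul]
      _ = r * ∫ θ in (0-z.arg)..(2*π-z.arg), |cos θ| := by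
          rw [integral_comp_sub_right (fun x => |cos x|)]
      _ = r * ∫ θ in (0:ℝ)..(2*π), |cos θ| := by
          have hper : Function.Periodic (fun x : ℝ => |cos x|) (2*π) := fun x => by
            simp [Real.cos_add_two_pi]
          have hh := hper.intervalIntegral_add_eq (0 - z.arg) 0
          rw [show (2:ℝ)*π - z.arg = 0 - z.arg + 2*π by ring, hh, zero_add]
      _ = 4 * Real.sqrt (a^2+b^2) := by rw [abs_cos_int17, hsqrt]; ring

private lemma angle_pick17 (N : ℕ) (hN : 0 < N) (θ : ℝ) (hθ : 0 ≤ θ) :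
    ∃ j : ℕ, j < N ∧ ∃ ψ : ℝ, Real.cos ψ = Real.cos (2*π*j/N) ∧
      Real.sin ψ = Real.sin (2*π*j/N) ∧ 0 ≤ θ - ψ ∧ θ - ψ ≤ 2*π/N := by
  have pi_pos := Real.pi_pos
  have hNR : (0:ℝ) < N := Nat.cast_pos.2 hN
  obtain ⟨x, hxdef⟩ : ∃ x, x = θ * N / (2*π) := ⟨_, rfl⟩
  have hx0 : 0 ≤ x := by rw [hxdef]; positivity
  obtain ⟨k, hkdef⟩ : ∃ k, k = ⌊x⌋₊ := ⟨_, rfl⟩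
  have hk1 : (k:ℝ) ≤ x := by rw [hkdef]; exact Nat.floor_le hx0
  have hk2 : x < k + 1 := by rw [hkdef]; exact Nat.lt_floor_add_one x
  have hθx : θ = 2*π*x/N := by rw [hxdef]; field_simp
  refine ⟨k % N, Nat.mod_lt _ hN, 2*π*(k:ℝ)/N, ?_, ?_, ?_, ?_⟩
  · have hq : (k:ℝ) = (N:ℝ) * ((k/N : ℕ):ℝ) + ((k % N : ℕ):ℝ) := by
      exact_mod_cast (Nat.div_add_mod k N).symm
    have hψ : 2*π*(k:ℝ)/N = 2*π*((k % N : ℕ):ℝ)/N + ((k / N : ℕ):ℝ) * (2*π) := by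
      rw [hq]; field_simp; ring
    rw [hψ, Real.cos_add_nat_mul_two_pi]
  · have hq : (k:ℝ) = (N:ℝ) * ((k/N : ℕ):ℝ) + ((k % N : ℕ):ℝ) := by
      exact_mod_cast (Nat.div_add_mod k N).symm
    have hψ : 2*π*(k:ℝ)/N = 2*π*((k % N : ℕ):ℝ)/N + ((k / N : ℕ):ℝ) * (2*π) := by
      rw [hq]; field_simp; ring
    rw [hψ, Real.sin_add_nat_mul_two_pi]
  · rw [hθx]
    have e : 2*π*x/N - 2*π*(k:ℝ)/N = 2*π*(x-(k:ℝ))/N := by ring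
    have h0 : 0 ≤ 2*π*(x-(k:ℝ))/N := div_nonneg (by nlinarith) hNR.le
    linarith
  · rw [hθx]
    have e : 2*π*x/N - 2*π*(k:ℝ)/N = 2*π*(x-(k:ℝ))/N := by ring
    have h0 : 2*π*(x-(k:ℝ))/N ≤ 2*π/N := (div_le_div_iff_of_pos_right hNR).mpr (by nlinarith)
    linarith

end Aux17

section Main17

open Real intervalIntegral Finset

private lemma edist_le_intrinsic17 {d : ℕ} (D : Set (E d)) (v z : E d) :
    edist v z ≤ intrinsicDist D v z := by
  refine le_iInf fun γ => le_iInf fun hc => le_iInf fun hm => le_iInf fun h0 => le_iInf fun h1 => ?_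
  have h0' : (0:ℝ) ∈ Icc (0:ℝ) 1 := ⟨le_refl 0, zero_le_one⟩
  have h1' : (1:ℝ) ∈ Icc (0:ℝ) 1 := ⟨zero_le_one, le_refl 1⟩
  calc edist v z = edist (γ 0) (γ 1) := by rw [h0, h1]
    _ ≤ _ := eVariationOn.edist_le γ h0' h1'

private lemma normsq_ge17 (z : E 3) (hz : 1 ≤ ‖z‖) :
    1 ≤ (z 0)^2 + (z 1)^2 + (z 2)^2 := by
  have hn : ‖z‖ = Real.sqrt ((z 0)^2 + (z 1)^2 + (z 2)^2) := by
    rw [EuclideanSpace.norm_eq, Fin.sum_univ_three]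
    simp [Real.norm_eq_abs, sq_abs]
  have hs : (0:ℝ) ≤ (z 0)^2 + (z 1)^2 + (z 2)^2 := by positivity
  have := Real.sq_sqrt hs
  nlinarith [hn ▸ hz]

private lemma distsq_le17 (z e : E 3) (r : ℝ) (hr : 0 ≤ r) (h : dist z e ≤ r) :
    (z 0 - e 0)^2 + (z 1 - e 1)^2 + (z 2 - e 2)^2 ≤ r^2 := by
  have hd : dist z e = Real.sqrt ((z 0 - e 0)^2 + (z 1 - e 1)^2 + (z 2 - e 2)^2) := by
    rw [EuclideanSpace.dist_eq, Fin.sum_univ_three]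
    simp [Real.dist_eq, sq_abs]
  have hs : (0:ℝ) ≤ (z 0 - e 0)^2 + (z 1 - e 1)^2 + (z 2 - e 2)^2 := by positivity
  have h2 := Real.sq_sqrt hs
  nlinarith [hd ▸ h, Real.sqrt_nonneg ((z 0 - e 0)^2 + (z 1 - e 1)^2 + (z 2 - e 2)^2)]

private lemma coord_bound17 (x y : E 3) :
    Real.sqrt ((x 0 - y 0)^2 + (x 1 - y 1)^2) ≤ dist x y := by
  have hd : dist x y = Real.sqrt ((x 0 - y 0)^2 + (x 1 - y 1)^2 + (x 2 - y 2)^2) := by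
    rw [EuclideanSpace.dist_eq, Fin.sum_univ_three]
    simp [Real.dist_eq, sq_abs]
  rw [hd]
  apply Real.sqrt_le_sqrt
  nlinarith [sq_nonneg (x 2 - y 2)]

/-- the point (cos φ, sin φ, 0) -/
private def pt17 (φ : ℝ) : E 3 :=
  (WithLp.equiv 2 (Fin 3 → ℝ)).symm ![Real.cos φ, Real.sin φ, 0]

private lemma pt17_apply0 (φ : ℝ) : pt17 φ 0 = Real.cos φ := rfl
private lemma pt17_apply1 (φ : ℝ) : pt17 φ 1 = Real.sin φ := rfl
private lemma pt17_apply2 (φ : ℝ) : pt17 φ 2 = 0 := rfl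

private lemma pt17_mem_equator (φ : ℝ) : pt17 φ ∈ equator := by
  refine ⟨pt17_apply2 φ, ?_⟩
  rw [pt17_apply0, pt17_apply1, cos_sq_add_sin_sq]

private lemma closure_shell_norm {z : E 3} (hz : z ∈ closure shell) : 1 ≤ ‖z‖ := by
  have hsub : closure shell ⊆ {w : E 3 | 1 ≤ ‖w‖} :=
    closure_minimal (fun w hw => le_of_lt hw.2.1)
      (isClosed_le continuous_const continuous_norm)
  exact hsub hz

private lemma near_point17 (K' : Loop shell) (ε : ℝ) (hε : 0 < ε)
    (h : hausdorffI shell equator K'.image ≤ ENNReal.ofReal ε)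
    (e : E 3) (he : e ∈ equator) :
    ∃ t ∈ Icc (0:ℝ) K'.len, dist (K'.toFun t) e ≤ 2*ε := by
  have h1 : (⨅ z ∈ K'.image, intrinsicDist shell e z) ≤ ENNReal.ofReal ε := by
    refine le_trans ?_ ((le_max_left _ _).trans h)
    exact le_iSup₂ (f := fun v (_ : v ∈ equator) => ⨅ z ∈ K'.image, intrinsicDist shell v z) e he
  have h2 : (⨅ z ∈ K'.image, intrinsicDist shell e z) < ENNReal.ofReal (2*ε) :=
    lt_of_le_of_lt h1 (by
      rw [ENNReal.ofReal_lt_ofReal_iff (by linarith)]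
      linarith)
  rw [iInf_lt_iff] at h2
  obtain ⟨z, hz⟩ := h2
  rw [iInf_lt_iff] at hz
  obtain ⟨hzmem, hzlt⟩ := hz
  have hed : edist e z < ENNReal.ofReal (2*ε) :=
    lt_of_le_of_lt (edist_le_intrinsic17 shell e z) hzlt
  rw [edist_lt_ofReal] at hed
  obtain ⟨t, ht, rfl⟩ := hzmem
  exact ⟨t, ht, by rw [dist_comm]; linarith [le_of_lt hed]⟩

set_option maxHeartbeats 2000000 in
theorem statement17' :
    ∃ c > (0:ℝ), ∃ ε₀ > (0:ℝ), ∀ ε : ℝ, 0 < ε → ε ≤ ε₀ →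
      ∀ K' : Loop shell, hausdorffI shell equator K'.image ≤ ENNReal.ofReal ε →
        2 * Real.pi - c * ε ^ 2 ≤ K'.len := by
  have pi_pos := Real.pi_pos
  refine ⟨16*π + 1, by positivity, 1/10, by norm_num, ?_⟩
  intro ε hε hε1 K' hH
  -- setup N
  obtain ⟨N, hNdef⟩ : ∃ N, N = ⌈π/ε⌉₊ := ⟨_, rfl⟩
  have hNpos : 0 < N := by
    rw [hNdef]; exact Nat.ceil_pos.2 (by positivity)
  have hNR : (0:ℝ) < N := Nat.cast_pos.2 hNpos
  have hNge : π/ε ≤ (N:ℝ) := by rw [hNdef]; exact Nat.le_ceil _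
  have h2piN : 2*π/(N:ℝ) ≤ 2*ε := by
    rw [div_le_iff₀ hNR]
    have : π ≤ ε * N := by
      rw [div_le_iff₀ hε] at hNge; linarith
    nlinarith
  -- pick near points
  have hex : ∀ j : Fin N, ∃ t ∈ Icc (0:ℝ) K'.len,
      dist (K'.toFun t) (pt17 (2*π*(j:ℕ)/N)) ≤ 2*ε := fun j =>
    near_point17 K' ε hε hH _ (pt17_mem_equator _)
  choose ts hts1 hts2 using hex
  -- sorted list of times
  obtain ⟨l, hldef⟩ : ∃ l, l = List.insertionSort (· ≤ ·) (List.ofFn ts) := ⟨_, rfl⟩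
  have hlperm : l.Perm (List.ofFn ts) := hldef ▸ List.perm_insertionSort _ _
  have hlsorted : l.Pairwise (· ≤ ·) := hldef ▸ List.pairwise_insertionSort _ _
  have hllen : l.length = N := by rw [hlperm.length_eq, List.length_ofFn]
  have hlmem : ∀ x ∈ l, x ∈ Icc (0:ℝ) K'.len := by
    intro x hx
    rw [hlperm.mem_iff, List.mem_ofFn] at hx
    obtain ⟨j, rfl⟩ := hx
    exact hts1 j
  -- the partition
  obtain ⟨u, hudef⟩ : ∃ u : ℕ → ℝ, u = fun i =>
      if i = 0 then 0 else if h : i - 1 < l.length then l.get ⟨i-1, h⟩ else K'.len := ⟨_, rfl⟩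
  have hu0 : u 0 = 0 := by simp [hudef]
  have huget : ∀ (i : ℕ) (h : i < l.length), u (i+1) = l.get ⟨i, h⟩ := by
    intro i h
    rw [hudef]; simp [h]
  have hulast : ∀ i, l.length < i → u i = K'.len := by
    intro i hi
    rw [hudef]
    have h1 : i ≠ 0 := by omega
    have h2 : ¬ (i - 1 < l.length) := by omega
    simp [h1, h2]
  have humem : ∀ i, u i ∈ Icc (0:ℝ) K'.len := by
    intro i
    rcases Nat.eq_zero_or_pos i with h | h
    · rw [h, hu0]; exact ⟨le_refl _, K'.len_nonneg⟩
    · by_cases h2 : i - 1 < l.length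
      · obtain ⟨i', rfl⟩ : ∃ i', i = i' + 1 := ⟨i - 1, by omega⟩
        rw [huget i' (by omega)]
        exact hlmem _ (List.get_mem l _)
      · rw [hulast i (by omega)]
        exact ⟨K'.len_nonneg, le_refl _⟩
  have humono : Monotone u := by
    apply monotone_nat_of_le_succ
    intro i
    rcases Nat.eq_zero_or_pos i with h | h
    · rw [h, hu0]; exact (humem 1).1
    · obtain ⟨i', rfl⟩ : ∃ i', i = i' + 1 := ⟨i - 1, by omega⟩
      by_cases h2 : i' < l.length
      · rw [huget i' h2]
        by_cases h3 : i' + 1 < l.length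
        · rw [huget (i'+1) h3]
          exact hlsorted.rel_get_of_lt (by simp [Fin.lt_def])
        · rw [hulast (i'+2) (by omega)]
          exact (hlmem _ (List.get_mem l _)).2
      · rw [hulast (i'+1) (by omega), hulast (i'+2) (by omega)]
  -- variation bound
  have hvar := eVariationOn.sum_le (f := K'.toFun) (n := N+1) humono humem
  have hlen : eVariationOn K'.toFun (Icc 0 K'.len) = ENNReal.ofReal K'.len :=
    K'.unitSpeed K'.len ⟨K'.len_nonneg, le_refl _⟩
  rw [hlen] at hvar
  have hsum : ∑ i ∈ Finset.range (N+1), dist (K'.toFun (u (i+1))) (K'.toFun (u i)) ≤ K'.len := by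
    rw [← ENNReal.ofReal_le_ofReal_iff K'.len_nonneg,
      ENNReal.ofReal_sum_of_nonneg (fun i _ => dist_nonneg)]
    simpa [edist_dist] using hvar
  -- notation
  obtain ⟨P, hPdef⟩ : ∃ P : ℕ → E 3, P = fun i => K'.toFun (u i) := ⟨_, rfl⟩
  have hPcyc : P 0 = P (N+1) := by
    rw [hPdef]
    simp only []
    rw [hu0, hulast (N+1) (by omega)]
    have := K'.periodic 0
    rw [zero_add] at this
    rw [this]
  -- position of each sample point
  have hpos : ∀ j : Fin N, ∃ a : ℕ, a ≤ N + 1 ∧ P a = K'.toFun (ts j) ∧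
      u a = ts j := by
    intro j
    have hmem : ts j ∈ l := by
      rw [hlperm.mem_iff, List.mem_ofFn]
      exact ⟨j, rfl⟩
    rw [List.mem_iff_get] at hmem
    obtain ⟨k, hk⟩ := hmem
    refine ⟨(k:ℕ) + 1, by have := k.isLt; omega, ?_, ?_⟩
    · rw [hPdef]; simp only []
      rw [huget (k:ℕ) k.isLt, ← hk]
    · rw [huget (k:ℕ) k.isLt, ← hk]
  -- membership facts for sample points
  have hPmem : ∀ i, P i ∈ closure shell := by
    intro i; rw [hPdef]; exact K'.mem _
  -- the integrand
  obtain ⟨G, hGdef⟩ : ∃ G : ℝ → ℝ, G = fun θ => ∑ i ∈ Finset.range (N+1),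
      |(P (i+1) 0 - P i 0) * Real.cos θ + (P (i+1) 1 - P i 1) * Real.sin θ| := ⟨_, rfl⟩
  have hGcont : Continuous G := by
    rw [hGdef]
    apply continuous_finset_sum
    intro i _
    exact ((continuous_const.mul continuous_cos).add
      (continuous_const.mul continuous_sin)).abs
  -- pointwise lower bound on G
  have hGlb : ∀ θ ∈ Icc (0:ℝ) (2*π), 4 - 32*ε^2 ≤ G θ := by
    intro θ hθmem
    obtain ⟨p, hpdef⟩ : ∃ p : ℕ → ℝ, p = fun i =>
        P i 0 * Real.cos θ + P i 1 * Real.sin θ := ⟨_, rfl⟩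
    have hGp : G θ = ∑ i ∈ Finset.range (N+1), |p (i+1) - p i| := by
      rw [hGdef, hpdef]
      apply Finset.sum_congr rfl
      intro i _
      congr 1
      ring
    -- generic: for any angle ϑ ≥ 0 there is an index with large projection
    have main : ∀ ϑ : ℝ, 0 ≤ ϑ → ∃ a : ℕ, a ≤ N + 1 ∧
        1 - 8*ε^2 ≤ P a 0 * Real.cos ϑ + P a 1 * Real.sin ϑ := by
      intro ϑ hϑ
      obtain ⟨j, hjN, ψ, hψc, hψs, hψ1, hψ2⟩ := angle_pick17 N hNpos ϑ hϑ
      obtain ⟨a, haN, hPa, hua⟩ := hpos ⟨j, hjN⟩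
      refine ⟨a, haN, ?_⟩
      have hz := hts2 ⟨j, hjN⟩
      rw [← hPa] at hz
      have h1 : 1 ≤ (P a 0)^2 + (P a 1)^2 + (P a 2)^2 :=
        normsq_ge17 (P a) (closure_shell_norm (hPmem a))
      have h2 := distsq_le17 (P a) (pt17 (2*π*(j:ℕ)/N)) (2*ε) (by linarith) hz
      rw [pt17_apply0, pt17_apply1, pt17_apply2] at h2
      have h2' : (P a 0 - Real.cos ψ)^2 + (P a 1 - Real.sin ψ)^2 + (P a 2)^2 ≤ 4*ε^2 := by
        rw [hψc, hψs]
        have e1 : (P a 2 - 0) = P a 2 := by ring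
        nlinarith [h2]
      have hθabs : |ϑ - ψ| ≤ 2*ε := by
        rw [abs_of_nonneg hψ1]
        linarith
      exact key17 ε (P a 0) (P a 1) (P a 2) ϑ ψ hε hε1 h1 h2' hθabs
    obtain ⟨a, haN, hpa⟩ := main θ hθmem.1
    obtain ⟨b, hbN, hpb'⟩ := main (θ + π) (by linarith [hθmem.1])
    have hpa' : 1 - 8*ε^2 ≤ p a := by rw [hpdef]; exact hpa
    have hpb : p b ≤ -(1 - 8*ε^2) := by
      rw [hpdef]
      simp only []
      rw [Real.cos_add_pi, Real.sin_add_pi] at hpb'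
      nlinarith [hpb']
    have hcyc : p 0 = p (N+1) := by rw [hpdef]; simp only []; rw [hPcyc]
    have := cyc17 p (N+1) a b hcyc haN hbN
    rw [hGp]
    nlinarith [this]
  -- integral comparison
  have hintG : IntervalIntegrable G MeasureTheory.volume 0 (2*π) :=
    hGcont.intervalIntegrable _ _
  have hIlb : (2*π) * (4 - 32*ε^2) ≤ ∫ θ in (0:ℝ)..(2*π), G θ := by
    have hconst : ∫ _ in (0:ℝ)..(2*π), (4 - 32*ε^2 : ℝ) = (2*π) * (4 - 32*ε^2) := by
      rw [intervalIntegral.integral_const, smul_eq_mul]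
      ring
    rw [← hconst]
    exact integral_mono_on (by linarith) (intervalIntegrable_const) hintG hGlb
  have hIsplit : ∫ θ in (0:ℝ)..(2*π), G θ = ∑ i ∈ Finset.range (N+1),
      ∫ θ in (0:ℝ)..(2*π), |(P (i+1) 0 - P i 0) * Real.cos θ + (P (i+1) 1 - P i 1) * Real.sin θ| := by
    rw [hGdef]
    exact intervalIntegral.integral_finset_sum (fun i _ =>
      (((continuous_const.mul continuous_cos).add
        (continuous_const.mul continuous_sin)).abs).intervalIntegrable _ _)
  have hIub : ∑ i ∈ Finset.range (N+1),
      (∫ θ in (0:ℝ)..(2*π), |(P (i+1) 0 - P i 0) * Real.cos θ + (P (i+1) 1 - P i 1) * Real.sin θ|)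
      ≤ 4 * K'.len := by
    have step : ∀ i ∈ Finset.range (N+1),
        (∫ θ in (0:ℝ)..(2*π), |(P (i+1) 0 - P i 0) * Real.cos θ + (P (i+1) 1 - P i 1) * Real.sin θ|)
        ≤ 4 * dist (P (i+1)) (P i) := by
      intro i _
      refine (planar_int17 _ _).trans ?_
      have := coord_bound17 (P (i+1)) (P i)
      linarith
    calc ∑ i ∈ Finset.range (N+1), (∫ θ in (0:ℝ)..(2*π),
            |(P (i+1) 0 - P i 0) * Real.cos θ + (P (i+1) 1 - P i 1) * Real.sin θ|)
        ≤ ∑ i ∈ Finset.range (N+1), 4 * dist (P (i+1)) (P i) := Finset.sum_le_sum step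
      _ = 4 * ∑ i ∈ Finset.range (N+1), dist (P (i+1)) (P i) := by rw [Finset.mul_sum]
      _ ≤ 4 * K'.len := by
          have : ∑ i ∈ Finset.range (N+1), dist (P (i+1)) (P i) ≤ K'.len := by
            rw [hPdef]; exact hsum
          linarith
  have hfinal : 2*π*(4 - 32*ε^2) ≤ 4 * K'.len := by
    rw [hIsplit] at hIlb
    linarith
  nlinarith [sq_nonneg ε, hfinal]

end Main17

/-- in the upper half-shell, any finite-length loop within intrinsic Hausdorff
distance `ε ≤ ε₀` of the equatorial unit circle `t ↦ (cos t, sin t, 0)` has length at least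
`2π - c ε²`. -/
theorem statement17 :
    ∃ c > (0:ℝ), ∃ ε₀ > (0:ℝ), ∀ ε : ℝ, 0 < ε → ε ≤ ε₀ →
      ∀ K' : Loop shell, hausdorffI shell equator K'.image ≤ ENNReal.ofReal ε →
        2 * Real.pi - c * ε ^ 2 ≤ K'.len := by
  exact statement17'

end PursuitRB
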